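/- Fix c1 > 0. There exists a constant C0 > 0, depending only on c1, such that for all integers m ≥ 3, n ≥ 3, every real u ≥ 1, and every integer K ≥ 1, the second-order Ditzian–Totik modulus of smoothness of f(p,q) = p·ln q on the convex polytope R = {(p,q) ∈ [0,1]² : p ≤ 2c1·ln m/m, q ≤ 4c1·ln n/n, p ≤ u·q} (with f(0,0) := 0, which makes f continuous on R) satisfies ω²_R(f, 1/K) ≤ C0·u·ln n/(K²·n). -/

import Mathlib

open scoped BigOperators

noncomputable section

/-- The normalized distance `d̃_K(e,x) = √(‖x − A‖ ‖x − B‖)`, where `A, B` are the two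
intersections of the line through `x` with (unit) direction `e` with `K`. Writing
`{s : ℝ | x + s • e ∈ K} = [s₋, s₊]` (with `s₋ ≤ 0 ≤ s₊` for `x ∈ K`, `K` compact
convex), one has `‖x − A‖ = −s₋` and `‖x − B‖ = s₊`, so
`d̃_K(e,x) = √(s₊ · (−s₋))`. -/
def dtDist (K : Set (EuclideanSpace ℝ (Fin 2))) (e x : EuclideanSpace ℝ (Fin 2)) : ℝ :=
  Real.sqrt (sSup {s : ℝ | x + s • e ∈ K} * (-sInf {s : ℝ | x + s • e ∈ K}))

/-- The second symmetric difference `Δ²_v f(x) = f(x+v) − 2 f(x) + f(x−v)` if both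
`x + v` and `x − v` lie in `K`, and `0` otherwise. -/
def symmDiff2 (K : Set (EuclideanSpace ℝ (Fin 2))) (f : EuclideanSpace ℝ (Fin 2) → ℝ)
    (x v : EuclideanSpace ℝ (Fin 2)) : ℝ :=
  open scoped Classical in
  if x + v ∈ K ∧ x - v ∈ K then f (x + v) - 2 * f x + f (x - v) else 0

/-- The second-order Ditzian–Totik modulus of smoothness:
`ω²_K(f,t) = sup_{‖e‖=1} sup_{x ∈ K} sup_{0 ≤ h ≤ t} |Δ²_{h d̃_K(e,x) e} f(x)|`. -/
def dtModulus (K : Set (EuclideanSpace ℝ (Fin 2))) (f : EuclideanSpace ℝ (Fin 2) → ℝ)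
    (t : ℝ) : ℝ :=
  sSup {r : ℝ | ∃ (e x : EuclideanSpace ℝ (Fin 2)) (h : ℝ),
    ‖e‖ = 1 ∧ x ∈ K ∧ 0 ≤ h ∧ h ≤ t ∧
    r = |symmDiff2 K f x ((h * dtDist K e x) • e)|}

/-- The polytope `R = {(p,q) ∈ [0,1]² : p ≤ 2c₁ ln m/m, q ≤ 4c₁ ln n/n, p ≤ u q}`
(coordinates: `x 0 = p`, `x 1 = q`). -/
def approxPolytope (c1 : ℝ) (m n : ℕ) (u : ℝ) : Set (EuclideanSpace ℝ (Fin 2)) :=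
  {x | 0 ≤ x 0 ∧ x 0 ≤ 1 ∧ 0 ≤ x 1 ∧ x 1 ≤ 1 ∧
    x 0 ≤ 2 * c1 * Real.log m / m ∧ x 1 ≤ 4 * c1 * Real.log n / n ∧ x 0 ≤ u * x 1}

/-! ### Auxiliary lemmas -/

lemma prodBound (X Y c C : ℝ) (hXY : 0 ≤ X * Y) (hX1 : X ≤ C - c) (hX2 : -c ≤ X)
    (hY1 : Y ≤ c) (hY2 : c - C ≤ Y) (hc : 0 ≤ c) (hcC : c ≤ C) : X * Y ≤ c * (C - c) := by
  rcases le_or_gt 0 Y with h | h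
  · nlinarith
  · nlinarith [mul_nonneg hc (sub_nonneg.2 hcC)]

lemma logDiffLe (x y : ℝ) (hx : 0 < x) (hy : 0 < y) :
    (Real.log y - Real.log x) * x ≤ y - x := by
  have h := Real.log_le_sub_one_of_pos (show 0 < y / x by positivity)
  rw [Real.log_div hy.ne' hx.ne'] at h
  have h2 := mul_le_mul_of_nonneg_right h hx.le
  calc (Real.log y - Real.log x) * x ≤ (y / x - 1) * x := h2
    _ = y - x := by field_simp

set_option maxHeartbeats 1600000 in
lemma coreB (p q a b u Q T : ℝ) (hq : 0 < q) (hb : 0 ≤ b)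
    (h1 : 0 ≤ p + a) (h2 : 0 ≤ p - a) (h3 : 0 ≤ q - b)
    (h4 : p + a ≤ u * (q + b)) (h5 : p - a ≤ u * (q - b))
    (hu : 1 ≤ u) (hQ : 0 < Q) (hqQ : q ≤ Q) (hT : 0 ≤ T)
    (hb2 : b ^ 2 ≤ q * Q * T) (ha2 : a ^ 2 ≤ p * u * Q * T) :
    |(p + a) * Real.log (q + b) - 2 * (p * Real.log q) + (p - a) * Real.log (q - b)| ≤
      12 * (u * Q * T) := by
  have hu0 : (0:ℝ) < u := lt_of_lt_of_le one_pos hu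
  have hp0 : 0 ≤ p := by linarith
  have hp : p ≤ u * q := by nlinarith
  have hQT0 : 0 ≤ u * Q * T := by positivity
  have hab : |a| * b ≤ u * q * Q * T := by
    have h1' : (|a| * b) ^ 2 ≤ (u * q * Q * T) ^ 2 := by
      have hsq : (|a| * b) ^ 2 = a ^ 2 * b ^ 2 := by rw [mul_pow, sq_abs]
      rw [hsq]
      have e1 : a ^ 2 * b ^ 2 ≤ (p * u * Q * T) * (q * Q * T) :=
        mul_le_mul ha2 hb2 (sq_nonneg b) (by positivity)
      have e2 : (p * u * Q * T) * (q * Q * T) ≤ ((u*q) * u * Q * T) * (q * Q * T) := by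
        have h := mul_le_mul_of_nonneg_right hp
          (show (0:ℝ) ≤ u * Q * T * (q * Q * T) by positivity)
        nlinarith [h]
      nlinarith [e1, e2]
    exact le_of_pow_le_pow_left₀ two_ne_zero (by positivity) h1'
  rcases eq_or_lt_of_le h3 with hqb | hqb
  · -- q = b case
    have hbq : b = q := by linarith
    have hpa : p - a = 0 := le_antisymm (by nlinarith) h2
    have hqQT : q ≤ Q * T := by nlinarith
    have e1 : q + b = 2 * q := by rw [hbq]; ring
    have e3 : p + a = 2 * p := by linarith
    rw [e1, hpa, zero_mul, add_zero, e3]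
    have e4 : 2 * p * Real.log (2 * q) - 2 * (p * Real.log q) = 2 * p * Real.log 2 := by
      rw [Real.log_mul two_ne_zero hq.ne']; ring
    rw [e4, abs_of_nonneg (by positivity)]
    nlinarith [Real.log_two_lt_d9, Real.log_nonneg (by norm_num : (1:ℝ) ≤ 2),
      mul_le_mul_of_nonneg_left hqQT hu0.le]
  · -- 0 < q - b
    have hq1 : 0 < q + b := by linarith
    set L1 := Real.log (q + b) with hL1
    set L0 := Real.log q with hL0
    set L2 := Real.log (q - b) with hL2
    have k1 : (L1 - L0) * q ≤ b := by have := logDiffLe q (q+b) hq hq1; linarith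
    have k2 : (L0 - L2) * (q - b) ≤ b := by have := logDiffLe (q-b) q hqb hq; linarith
    have hm1 : L0 ≤ L1 := Real.log_le_log hq (by linarith)
    have hm2 : L2 ≤ L0 := Real.log_le_log hqb (by linarith)
    have hD0 : L1 + L2 ≤ 2 * L0 := by
      have hle : (q + b) * (q - b) ≤ q ^ 2 := by nlinarith
      have := Real.log_le_log (by positivity) hle
      rw [Real.log_mul hq1.ne' hqb.ne', Real.log_pow] at this
      push_cast at this; linarith
    have k3 : (2 * L0 - L1 - L2) * ((q + b) * (q - b)) ≤ b ^ 2 := by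
      have := logDiffLe ((q + b) * (q - b)) (q ^ 2) (by positivity) (by positivity)
      rw [Real.log_mul hq1.ne' hqb.ne', Real.log_pow] at this
      push_cast at this
      linarith [this]
    rcases le_or_gt (2 * b) q with hcase | hcase
    · -- b ≤ q/2
      have h4b := mul_le_mul hcase hcase (by positivity : (0:ℝ) ≤ 2 * b) hq.le
      have hprod : q ^ 2 ≤ 2 * ((q + b) * (q - b)) := by nlinarith [h4b]
      have hD0' : (0:ℝ) ≤ 2 * L0 - L1 - L2 := by linarith
      have hDq : (2 * L0 - L1 - L2) * q ^ 2 ≤ 2 * b ^ 2 := by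
        have := mul_le_mul_of_nonneg_left hprod hD0'
        linarith [k3, this]
      have bound1 : p * (2 * L0 - L1 - L2) ≤ 2 * (u * Q * T) := by
        have s1 := mul_le_mul_of_nonneg_left hDq hp0
        have s2 : p * b ^ 2 ≤ (u * q) * (q * Q * T) :=
          mul_le_mul hp hb2 (sq_nonneg b) (by positivity)
        have s3 : (p * (2 * L0 - L1 - L2)) * q ^ 2 ≤ (2 * (u * Q * T)) * q ^ 2 := by
          nlinarith [s1, s2]
        exact le_of_mul_le_mul_right s3 (pow_pos hq 2)
      have hS3 : (L1 - L2) * q ≤ 3 * b := by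
        have e1 := mul_le_mul_of_nonneg_left (show q ≤ 2 * (q - b) by linarith)
          (show (0:ℝ) ≤ L0 - L2 by linarith)
        nlinarith [k1, k2]
      have bound2 : |a| * (L1 - L2) ≤ 3 * (u * Q * T) := by
        have e1 := mul_le_mul_of_nonneg_left hS3 (abs_nonneg a)
        have s3 : (|a| * (L1 - L2)) * q ≤ (3 * (u * Q * T)) * q := by
          nlinarith [e1, hab]
        exact le_of_mul_le_mul_right s3 hq
      have eE : (p + a) * L1 - 2 * (p * L0) + (p - a) * L2
          = a * (L1 - L2) - p * (2 * L0 - L1 - L2) := by ring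
      rw [eE]
      calc |a * (L1 - L2) - p * (2 * L0 - L1 - L2)|
          ≤ |a * (L1 - L2)| + |p * (2 * L0 - L1 - L2)| := abs_sub _ _
        _ = |a| * (L1 - L2) + p * (2 * L0 - L1 - L2) := by
            rw [abs_mul, abs_mul, abs_of_nonneg (by linarith : (0:ℝ) ≤ L1 - L2),
              abs_of_nonneg hp0, abs_of_nonneg (by linarith : (0:ℝ) ≤ 2 * L0 - L1 - L2)]
        _ ≤ 3 * (u * Q * T) + 2 * (u * Q * T) := add_le_add bound2 bound1
        _ ≤ 12 * (u * Q * T) := by linarith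
    · -- b > q/2
      have hq4 : q ≤ 4 * (Q * T) := by nlinarith [hb2, hcase, hq, mul_pos hq hq]
      have hl2 : L1 - L0 ≤ Real.log 2 := by
        have hle : q + b ≤ 2 * q := by linarith
        have := Real.log_le_log hq1 hle
        rw [Real.log_mul two_ne_zero hq.ne'] at this
        linarith
      have hS7 : L1 - L0 ≤ 0.7 := by linarith [Real.log_two_lt_d9]
      have hPa : p + a ≤ 2 * (u * q) := by nlinarith
      have huq4 : u * q ≤ u * (4 * (Q * T)) := mul_le_mul_of_nonneg_left hq4 hu0.le
      have bound1 : (p + a) * (L1 - L0) ≤ 6 * (u * Q * T) := by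
        have e1 : (p + a) * (L1 - L0) ≤ (2 * (u * q)) * 0.7 :=
          mul_le_mul hPa hS7 (by linarith) (by positivity)
        nlinarith [e1, huq4]
      have bound2 : (p - a) * (L0 - L2) ≤ 4 * (u * Q * T) := by
        have e1 : (p - a) * (L0 - L2) ≤ (u * (q - b)) * (L0 - L2) :=
          mul_le_mul_of_nonneg_right h5 (by linarith)
        have e2 : u * ((L0 - L2) * (q - b)) ≤ u * b := mul_le_mul_of_nonneg_left k2 hu0.le
        have e3 : u * b ≤ u * q := mul_le_mul_of_nonneg_left (by linarith) hu0.le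
        nlinarith [e1, e2, e3, huq4]
      have eE : (p + a) * L1 - 2 * (p * L0) + (p - a) * L2
          = (p + a) * (L1 - L0) - (p - a) * (L0 - L2) := by ring
      rw [eE]
      calc |(p + a) * (L1 - L0) - (p - a) * (L0 - L2)|
          ≤ |(p + a) * (L1 - L0)| + |(p - a) * (L0 - L2)| := abs_sub _ _
        _ = (p + a) * (L1 - L0) + (p - a) * (L0 - L2) := by
            rw [abs_mul, abs_mul, abs_of_nonneg h1, abs_of_nonneg h2,
              abs_of_nonneg (by linarith : (0:ℝ) ≤ L1 - L0),
              abs_of_nonneg (by linarith : (0:ℝ) ≤ L0 - L2)]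
        _ ≤ 6 * (u * Q * T) + 4 * (u * Q * T) := add_le_add bound1 bound2
        _ ≤ 12 * (u * Q * T) := by linarith

lemma coreAll (p q a b u Q T : ℝ) (hq0 : 0 ≤ q)
    (h1 : 0 ≤ p + a) (h2 : 0 ≤ p - a) (h3 : 0 ≤ q - b) (h6 : 0 ≤ q + b)
    (h4 : p + a ≤ u * (q + b)) (h5 : p - a ≤ u * (q - b))
    (hu : 1 ≤ u) (hQ : 0 < Q) (hqQ : q ≤ Q) (hT : 0 ≤ T)
    (hb2 : b ^ 2 ≤ q * Q * T) (ha2 : a ^ 2 ≤ p * u * Q * T) :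
    |(p + a) * Real.log (q + b) - 2 * (p * Real.log q) + (p - a) * Real.log (q - b)| ≤
      12 * (u * Q * T) := by
  have hu0 : (0:ℝ) < u := lt_of_lt_of_le one_pos hu
  have hQT0 : (0:ℝ) ≤ 12 * (u * Q * T) := by positivity
  rcases eq_or_lt_of_le hq0 with hq | hq
  · -- q = 0
    have hq' : q = 0 := hq.symm
    subst hq'
    have hb0 : b = 0 := by linarith
    subst hb0
    simp only [add_zero, sub_zero, Real.log_zero, mul_zero, zero_sub, zero_add]
    simpa using hQT0
  · rcases le_or_gt 0 b with hb | hb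
    · exact coreB p q a b u Q T hq hb h1 h2 h3 h4 h5 hu hQ hqQ hT hb2 ha2
    · have res := coreB p q (-a) (-b) u Q T hq (by linarith) (by linarith) (by linarith)
        (by linarith) (by linarith [h5]) (by linarith [h4]) hu hQ hqQ hT
        (by rw [neg_pow]; simpa using hb2) (by rw [neg_pow]; simpa using ha2)
      have heq : (p + a) * Real.log (q + b) - 2 * (p * Real.log q) + (p - a) * Real.log (q - b)
          = (p + -a) * Real.log (q + -b) - 2 * (p * Real.log q)
            + (p - -a) * Real.log (q - -b) := by
        rw [show q + -b = q - b by ring, show q - -b = q + b by ring]; ring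
      rw [heq]
      exact res

lemma isClosed_approxPolytope (c1 : ℝ) (m n : ℕ) (u : ℝ) :
    IsClosed (approxPolytope c1 m n u) := by
  have hc : ∀ i : Fin 2, Continuous (fun x : EuclideanSpace ℝ (Fin 2) => x i) :=
    fun i => (EuclideanSpace.proj i).continuous
  unfold approxPolytope
  simp only [Set.setOf_and]
  exact (isClosed_le continuous_const (hc 0)).inter
    ((isClosed_le (hc 0) continuous_const).inter
    ((isClosed_le continuous_const (hc 1)).inter
    ((isClosed_le (hc 1) continuous_const).inter
    ((isClosed_le (hc 0) continuous_const).inter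
    ((isClosed_le (hc 1) continuous_const).inter
    (isClosed_le (hc 0) ((hc 1).const_smul u)))))))

lemma dtDist_sq_bound (Rs : Set (EuclideanSpace ℝ (Fin 2))) (hR : IsClosed Rs)
    (hbox : ∀ y ∈ Rs, ∀ j : Fin 2, 0 ≤ y j ∧ y j ≤ 1)
    (e x : EuclideanSpace ℝ (Fin 2)) (he : ‖e‖ = 1) (hx : x ∈ Rs)
    (i : Fin 2) (hi : ℝ) (hhi : ∀ y ∈ Rs, y i ≤ hi) :
    (dtDist Rs e x * e i) ^ 2 ≤ x i * (hi - x i) := by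
  set S := {s : ℝ | x + s • e ∈ Rs} with hS
  have h0S : (0:ℝ) ∈ S := by
    show x + (0:ℝ) • e ∈ Rs
    simpa using hx
  have hsum : (e 0) ^ 2 + (e 1) ^ 2 = 1 := by
    have h2 : Real.sqrt (∑ j, ‖e j‖ ^ 2) = 1 := by rw [← EuclideanSpace.norm_eq]; exact he
    have h3 : (∑ j, ‖e j‖ ^ 2) = 1 := by
      rw [← Real.sq_sqrt (Finset.sum_nonneg fun j _ => sq_nonneg ‖e j‖), h2]; norm_num
    simpa [Fin.sum_univ_two, Real.norm_eq_abs, sq_abs] using h3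
  have hSb : ∀ s ∈ S, |s| ≤ 2 := by
    intro s hs
    have hys := hbox _ hs
    have hxs := hbox _ hx
    have c0 : (x + s • e) 0 = x 0 + s * e 0 := rfl
    have c1 : (x + s • e) 1 = x 1 + s * e 1 := rfl
    have b0 := hys 0; have b1 := hys 1
    rw [c0] at b0; rw [c1] at b1
    have d0 := hxs 0; have d1 := hxs 1
    have e0sq : (s * e 0) ^ 2 ≤ 1 := by nlinarith [b0.1, b0.2, d0.1, d0.2]
    have e1sq : (s * e 1) ^ 2 ≤ 1 := by nlinarith [b1.1, b1.2, d1.1, d1.2]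
    have hs2 : s ^ 2 ≤ 4 := by nlinarith [hsum, e0sq, e1sq]
    rw [abs_le]
    constructor <;> nlinarith [hs2]
  have hbdd : BddAbove S := ⟨2, fun s hs => (abs_le.mp (hSb s hs)).2⟩
  have hbddb : BddBelow S := ⟨-2, fun s hs => (abs_le.mp (hSb s hs)).1⟩
  have hScl : IsClosed S := by
    have : Continuous fun s : ℝ => x + s • e := by continuity
    exact hR.preimage this
  have hne : S.Nonempty := ⟨0, h0S⟩
  have hMS : sSup S ∈ S := hScl.csSup_mem hne hbdd
  have hmS : sInf S ∈ S := hScl.csInf_mem hne hbddb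
  have hM0 : 0 ≤ sSup S := le_csSup hbdd h0S
  have hm0 : sInf S ≤ 0 := csInf_le hbddb h0S
  have hD2 : dtDist Rs e x ^ 2 = sSup S * (-sInf S) :=
    Real.sq_sqrt (mul_nonneg hM0 (neg_nonneg.2 hm0))
  have key : (dtDist Rs e x * e i) ^ 2 = (sSup S * e i) * (-(sInf S * e i)) := by
    rw [mul_pow, hD2]; ring
  rw [key]
  have hyP : x + sSup S • e ∈ Rs := hMS
  have hym : x + sInf S • e ∈ Rs := hmS
  have cP : (x + sSup S • e) i = x i + sSup S * e i := rfl
  have cm : (x + sInf S • e) i = x i + sInf S * e i := rfl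
  have bP0 : 0 ≤ x i + sSup S * e i := by rw [← cP]; exact (hbox _ hyP i).1
  have bPh : x i + sSup S * e i ≤ hi := by rw [← cP]; exact hhi _ hyP
  have bm0 : 0 ≤ x i + sInf S * e i := by rw [← cm]; exact (hbox _ hym i).1
  have bmh : x i + sInf S * e i ≤ hi := by rw [← cm]; exact hhi _ hym
  have hXY : 0 ≤ (sSup S * e i) * (-(sInf S * e i)) := by
    have hr : (sSup S * e i) * (-(sInf S * e i)) = (sSup S * (-sInf S)) * (e i) ^ 2 := by ring
    rw [hr]
    exact mul_nonneg (mul_nonneg hM0 (neg_nonneg.2 hm0)) (sq_nonneg _)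
  exact prodBound _ _ _ _ hXY (by linarith) (by linarith) (by linarith) (by linarith)
    (hbox _ hx i).1 (hhi _ hx)

set_option maxHeartbeats 1600000 in
/-- Ditzian–Totik modulus bound for `f(p,q) = p ln q` on the polytope `R`:
`ω²_R(f, 1/K) ≤ C₀ u ln n / (K² n)`, with `C₀` depending only on `c₁`.
(Here `f(0,0) = 0` holds automatically since `Real.log 0 = 0`, and whenever
`q = 0` in `R` one has `p = 0`.) -/
theorem dt_modulus_p_log_q (c1 : ℝ) (hc1 : 0 < c1) :
    ∃ C0 : ℝ, 0 < C0 ∧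
      ∀ (m n : ℕ) (u : ℝ) (K : ℕ), 3 ≤ m → 3 ≤ n → 1 ≤ u → 1 ≤ K →
        dtModulus (approxPolytope c1 m n u)
            (fun x : EuclideanSpace ℝ (Fin 2) => x 0 * Real.log (x 1)) (1 / K) ≤
          C0 * u * Real.log n / ((K : ℝ) ^ 2 * n) := by
  refine ⟨48 * c1 + 48, by positivity, ?_⟩
  intro m n u K hm hn hu hK
  have hu0 : (0:ℝ) < u := lt_of_lt_of_le one_pos hu
  have hn1 : (1:ℝ) < (n:ℝ) := by exact_mod_cast lt_of_lt_of_le (by norm_num) hn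
  have hn0 : (0:ℝ) < (n:ℝ) := by linarith
  have hlogn : 0 < Real.log n := Real.log_pos hn1
  have hK0 : (0:ℝ) < (K:ℝ) := by exact_mod_cast lt_of_lt_of_le zero_lt_one hK
  set Rs := approxPolytope c1 m n u with hRs
  set Q : ℝ := 4 * c1 * Real.log n / n with hQdef
  have hQpos : 0 < Q := by
    apply div_pos _ hn0
    exact mul_pos (by positivity) hlogn
  set RHS : ℝ := (48 * c1 + 48) * u * Real.log n / ((K : ℝ) ^ 2 * n) with hRHSdef
  have hRHS0 : 0 ≤ RHS := by
    apply div_nonneg _ (by positivity)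
    exact mul_nonneg (mul_nonneg (by linarith) hu0.le) hlogn.le
  apply Real.sSup_le _ hRHS0
  rintro r ⟨e, x, h, he, hx, hh0, hh1, rfl⟩
  rw [symmDiff2]
  split_ifs with hmem
  · obtain ⟨hmem1, hmem2⟩ := hmem
    have hRcl : IsClosed Rs := isClosed_approxPolytope c1 m n u
    have hbox : ∀ y ∈ Rs, ∀ j : Fin 2, 0 ≤ y j ∧ y j ≤ 1 := by
      intro y hy j
      simp only [hRs, approxPolytope, Set.mem_setOf_eq] at hy
      fin_cases j
      · exact ⟨hy.1, hy.2.1⟩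
      · exact ⟨hy.2.2.1, hy.2.2.2.1⟩
    have hhi1 : ∀ y ∈ Rs, y 1 ≤ Q := by
      intro y hy
      simp only [hRs, approxPolytope, Set.mem_setOf_eq] at hy
      exact hy.2.2.2.2.2.1
    have hhi0 : ∀ y ∈ Rs, y 0 ≤ u * Q := by
      intro y hy
      have hy1 := hhi1 y hy
      simp only [hRs, approxPolytope, Set.mem_setOf_eq] at hy
      calc y 0 ≤ u * y 1 := hy.2.2.2.2.2.2
        _ ≤ u * Q := mul_le_mul_of_nonneg_left hy1 hu0.le
    have hgeo1 := dtDist_sq_bound Rs hRcl hbox e x he hx 1 Q hhi1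
    have hgeo0 := dtDist_sq_bound Rs hRcl hbox e x he hx 0 (u * Q) hhi0
    -- coordinates of v
    set D : ℝ := dtDist Rs e x with hD
    set v : EuclideanSpace ℝ (Fin 2) := (h * D) • e with hv
    have cv0 : v 0 = h * D * e 0 := rfl
    have cv1 : v 1 = h * D * e 1 := rfl
    -- membership coordinates
    have hxm : x ∈ Rs := hx
    simp only [hRs, approxPolytope, Set.mem_setOf_eq] at hxm hmem1 hmem2
    have cp1 : (x + v) 0 = x 0 + v 0 := rfl
    have cp2 : (x + v) 1 = x 1 + v 1 := rfl
    have cm1 : (x - v) 0 = x 0 - v 0 := rfl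
    have cm2 : (x - v) 1 = x 1 - v 1 := rfl
    rw [cp1, cp2] at hmem1
    rw [cm1, cm2] at hmem2
    -- step bounds
    have hb2 : (v 1) ^ 2 ≤ x 1 * Q * h ^ 2 := by
      have hmul := mul_le_mul_of_nonneg_left hgeo1 (sq_nonneg h)
      have hv1sq : (v 1) ^ 2 = h ^ 2 * (D * e 1) ^ 2 := by rw [cv1]; ring
      rw [hv1sq]
      linarith [hmul, mul_nonneg (sq_nonneg h) (sq_nonneg (x 1))]
    have ha2 : (v 0) ^ 2 ≤ x 0 * u * Q * h ^ 2 := by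
      have hmul := mul_le_mul_of_nonneg_left hgeo0 (sq_nonneg h)
      have hv0sq : (v 0) ^ 2 = h ^ 2 * (D * e 0) ^ 2 := by rw [cv0]; ring
      rw [hv0sq]
      linarith [hmul, mul_nonneg (sq_nonneg h) (sq_nonneg (x 0))]
    have hcore := coreAll (x 0) (x 1) (v 0) (v 1) u Q (h ^ 2)
      hxm.2.2.1 hmem1.1 hmem2.1 hmem2.2.2.1 hmem1.2.2.1
      hmem1.2.2.2.2.2.2 hmem2.2.2.2.2.2.2
      hu hQpos hxm.2.2.2.2.2.1 (sq_nonneg h) hb2 ha2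
    have hfinal : 12 * (u * Q * h ^ 2) ≤ RHS := by
      have hhK : h * K ≤ 1 := by
        rw [le_div_iff₀ hK0] at hh1
        linarith
      have hK2 : h ^ 2 * (K:ℝ) ^ 2 ≤ 1 := by
        have hm := mul_le_mul hhK hhK (mul_nonneg hh0 hK0.le) zero_le_one
        calc h ^ 2 * (K:ℝ) ^ 2 = (h * K) * (h * K) := by ring
          _ ≤ 1 * 1 := hm
          _ = 1 := one_mul 1
      rw [hRHSdef, le_div_iff₀ (show (0:ℝ) < (K:ℝ) ^ 2 * n by positivity)]
      have expand : 12 * (u * Q * h ^ 2) * ((K:ℝ) ^ 2 * n)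
          = 48 * c1 * (u * Real.log n) * (h ^ 2 * (K:ℝ) ^ 2) := by
        rw [hQdef]; field_simp; ring
      rw [expand]
      have hul : 0 ≤ u * Real.log n := mul_nonneg hu0.le hlogn.le
      have hc48 : 0 ≤ 48 * c1 * (u * Real.log n) := by positivity
      linarith [mul_le_mul_of_nonneg_left hK2 hc48, hul]
    calc |(x 0 + v 0) * Real.log (x 1 + v 1) - 2 * (x 0 * Real.log (x 1))
          + (x 0 - v 0) * Real.log (x 1 - v 1)| ≤ 12 * (u * Q * h ^ 2) := hcore
      _ ≤ RHS := hfinal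
  · rw [abs_zero]; exact hRHS0

end
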